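/- For every x ∈ D, the return time σ to the set G is almost surely finite under P_x, and moreover E_x[σ] ≤ (V(x) + b)/β. -/

import Mathlib

set_option maxHeartbeats 1000000


open MeasureTheory ProbabilityTheory ENNReal

/-- The first hitting time `σ = inf {n ≥ 1 : ω n ∈ G}` of a set `G`, with value `⊤ = ∞`
if the trajectory never enters `G` at a positive time. -/
noncomputable def hittingTimeGe1 {D : Type*} (G : Set D) (ω : ℕ → D) : ℕ∞ :=
  ⨅ n ∈ {n : ℕ | 1 ≤ n ∧ ω n ∈ G}, (n : ℕ∞)
lemma markov_lintegral {D : Type*} [MeasurableSpace D]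
    (κ : ProbabilityTheory.Kernel D D)
    (μ : Measure (ℕ → D)) (n : ℕ) (B : Set (ℕ → D))
    (hB : MeasurableSet[MeasurableSpace.comap (fun (ω : ℕ → D) (i : Fin (n + 1)) => ω i) inferInstance] B)
    (hM : ∀ A : Set D, MeasurableSet A →
      μ (B ∩ {ω | ω (n + 1) ∈ A}) = ∫⁻ ω in B, κ (ω n) A ∂μ)
    (g : D → ℝ≥0∞) (hg : Measurable g) :
    ∫⁻ ω in B, g (ω (n+1)) ∂μ = ∫⁻ ω in B, ∫⁻ y, g y ∂(κ (ω n)) ∂μ := by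
  have hκm : Measurable fun ω : ℕ → D => κ (ω n) :=
    κ.measurable.comp (measurable_pi_apply n)
  have h1 : Measure.map (fun ω : ℕ → D => ω (n+1)) (μ.restrict B)
      = (μ.restrict B).bind (fun ω => κ (ω n)) := by
    ext A hA
    rw [Measure.map_apply (measurable_pi_apply _) hA,
      Measure.restrict_apply (measurable_pi_apply (n+1) hA),
      Measure.bind_apply hA hκm.aemeasurable]
    have hset : (fun ω : ℕ → D => ω (n+1)) ⁻¹' A ∩ B = B ∩ {ω | ω (n+1) ∈ A} := by
      ext ω; simp [Set.mem_inter_iff]; tauto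
    rw [hset, hM A hA]
  calc ∫⁻ ω in B, g (ω (n+1)) ∂μ
      = ∫⁻ y, g y ∂(Measure.map (fun ω : ℕ → D => ω (n+1)) (μ.restrict B)) :=
        (lintegral_map hg (measurable_pi_apply _)).symm
    _ = ∫⁻ y, g y ∂((μ.restrict B).bind fun ω => κ (ω n)) := by rw [h1]
    _ = ∫⁻ ω in B, ∫⁻ y, g y ∂(κ (ω n)) ∂μ := Measure.lintegral_bind hκm.aemeasurable hg.aemeasurable

lemma enat_coe_eq_tsum (m : ℕ∞) :
    (m : ℝ≥0∞) = ∑' n : ℕ, (if (n : ℕ∞) < m then 1 else 0) := by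
  cases m with
  | top =>
    have h : ∀ n : ℕ, (if (n : ℕ∞) < ⊤ then (1:ℝ≥0∞) else 0) = 1 := fun n =>
      if_pos (lt_top_iff_ne_top.mpr (ENat.coe_ne_top n))
    rw [tsum_congr h]
    simp [ENNReal.tsum_const_eq_top_of_ne_zero]
  | coe k =>
    have h : ∑' n : ℕ, (if (n : ℕ∞) < (k : ℕ∞) then (1:ℝ≥0∞) else 0) = k := by
      rw [tsum_eq_sum (s := Finset.range k) (f := fun n : ℕ => if (n : ℕ∞) < (k : ℕ∞) then (1:ℝ≥0∞) else 0)
        (by intro n hn; simp only [Finset.mem_range] at hn; simp [Nat.cast_lt]; omega)]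
      rw [Finset.sum_congr rfl (fun n hn => by
        simp only [Finset.mem_range] at hn
        exact if_pos (Nat.cast_lt.mpr hn))]
      simp
    rw [h]; simp
section helpers
variable {D : Type*} [MeasurableSpace D] (G : Set D) (hG : MeasurableSet G)

def avoidSet (G : Set D) (n : ℕ) : Set (ℕ → D) := {ω | ∀ k, 1 ≤ k → k ≤ n → ω k ∉ G}

include hG in
lemma avoidSet_measurable (n : ℕ) : MeasurableSet (avoidSet G n) := by
  have : avoidSet G n = ⋂ k, ⋂ (_ : 1 ≤ k), ⋂ (_ : k ≤ n), (fun ω : ℕ → D => ω k) ⁻¹' Gᶜ := by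
    ext ω; simp [avoidSet]
  rw [this]
  exact MeasurableSet.iInter fun k => MeasurableSet.iInter fun _ =>
    MeasurableSet.iInter fun _ => (measurable_pi_apply k) hG.compl

include hG in
lemma avoidSet_comap (n : ℕ) :
    MeasurableSet[MeasurableSpace.comap (fun (ω : ℕ → D) (i : Fin (n + 1)) => ω i)
      inferInstance] (avoidSet G n) := by
  refine ⟨{f : Fin (n+1) → D | ∀ i : Fin (n+1), 1 ≤ (i : ℕ) → f i ∉ G}, ?_, ?_⟩
  · have : {f : Fin (n+1) → D | ∀ i : Fin (n+1), 1 ≤ (i : ℕ) → f i ∉ G}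
        = ⋂ i : Fin (n+1), ⋂ (_ : 1 ≤ (i : ℕ)), (fun f : Fin (n+1) → D => f i) ⁻¹' Gᶜ := by
      ext f; simp
    rw [this]
    exact MeasurableSet.iInter fun i => MeasurableSet.iInter fun _ =>
      (measurable_pi_apply i) hG.compl
  · ext ω
    constructor
    · intro hω k hk1 hkn
      exact hω ⟨k, Nat.lt_succ_of_le hkn⟩ hk1
    · intro hω i hi1
      exact hω i hi1 (Nat.lt_succ_iff.mp i.isLt)

omit [MeasurableSpace D] in
lemma avoidSet_antitone (n : ℕ) : avoidSet G (n+1) ⊆ avoidSet G n :=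
  fun _ hω k hk1 hkn => hω k hk1 (Nat.le_succ_of_le hkn)

omit [MeasurableSpace D] in
lemma lt_hittingTime_iff (ω : ℕ → D) (n : ℕ) :
    (n : ℕ∞) < hittingTimeGe1 G ω ↔ ω ∈ avoidSet G n := by
  constructor
  · intro h k hk1 hkn hkG
    have h1 : hittingTimeGe1 G ω ≤ (k : ℕ∞) := by
      unfold hittingTimeGe1
      exact iInf₂_le k ⟨hk1, hkG⟩
    have h2 : (n : ℕ∞) < (k : ℕ∞) := lt_of_lt_of_le h h1
    exact absurd (Nat.cast_le.mpr hkn) (not_le.mpr h2)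
  · intro hω
    have h1 : ((n+1 : ℕ) : ℕ∞) ≤ hittingTimeGe1 G ω := by
      unfold hittingTimeGe1
      refine le_iInf₂ fun k hk => ?_
      obtain ⟨hk1, hkG⟩ := hk
      have : n + 1 ≤ k := by
        by_contra hc
        exact hω k hk1 (by omega) hkG
      exact_mod_cast this
    exact lt_of_lt_of_le (by exact_mod_cast Nat.lt_succ_self n) h1

end helpers
theorem drift_return_time_finite
    {D : Type*} [MeasurableSpace D]
    (κ : ProbabilityTheory.Kernel D D) [ProbabilityTheory.IsMarkovKernel κ]
    (Px : D → Measure (ℕ → D))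
    (hprob : ∀ x, IsProbabilityMeasure (Px x))
    (hstart : ∀ x, Px x {ω | ω 0 = x} = 1)
    (hMarkov : ∀ (x : D) (n : ℕ) (B : Set (ℕ → D)),
      MeasurableSet[MeasurableSpace.comap (fun (ω : ℕ → D) (i : Fin (n + 1)) => ω i)
        inferInstance] B →
      ∀ A : Set D, MeasurableSet A →
        Px x (B ∩ {ω | ω (n + 1) ∈ A}) = ∫⁻ ω in B, κ (ω n) A ∂(Px x))
    (V : D → ℝ) (hV_meas : Measurable V) (hV_one : ∀ x, 1 ≤ V x)
    (G : Set D) (hG : MeasurableSet G)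
    (β b : ℝ) (hβ : 0 < β) (hβ1 : β < 1) (hb : 0 ≤ b)
    (hdrift : ∀ x, ∫⁻ y, ENNReal.ofReal (V y) ∂(κ x)
      ≤ ENNReal.ofReal ((1 - β) * V x + b * G.indicator 1 x)) :
    ∀ x : D,
      Px x {ω | hittingTimeGe1 G ω < ⊤} = 1 ∧
      ∫⁻ ω, (hittingTimeGe1 G ω : ℝ≥0∞) ∂(Px x) ≤ ENNReal.ofReal ((V x + b) / β) := by
  intro x
  haveI := hprob x
  set μ := Px x with hμdef
  set r : ℝ≥0∞ := ENNReal.ofReal (1 - β) with hrdef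
  set C : ℝ≥0∞ := ENNReal.ofReal ((1 - β) * V x + b) with hCdef
  have h1β : (0:ℝ) ≤ 1 - β := by linarith
  have hr1 : r < 1 := by rw [hrdef]; exact ENNReal.ofReal_lt_one.mpr (by linarith)
  have hVnn : ∀ y, (0:ℝ) ≤ V y := fun y => le_trans zero_le_one (hV_one y)
  set M : ℕ → ℝ≥0∞ :=
    fun n => ∫⁻ ω in avoidSet G n, ENNReal.ofReal (V (ω n)) ∂μ with hMdef
  have hVm : ∀ n : ℕ, Measurable fun ω : ℕ → D => ENNReal.ofReal (V (ω n)) :=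
    fun n => ENNReal.measurable_ofReal.comp (hV_meas.comp (measurable_pi_apply n))
  -- one-step estimate via the Markov property and the drift condition
  have hstep0 : ∀ n, M (n+1) ≤ ∫⁻ ω in avoidSet G n,
      ENNReal.ofReal ((1 - β) * V (ω n) + b * G.indicator 1 (ω n)) ∂μ := by
    intro n
    have e1 : M (n+1) ≤ ∫⁻ ω in avoidSet G n, ENNReal.ofReal (V (ω (n+1))) ∂μ :=
      lintegral_mono_set (avoidSet_antitone G n)
    have e2 : ∫⁻ ω in avoidSet G n, ENNReal.ofReal (V (ω (n+1))) ∂μ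
        = ∫⁻ ω in avoidSet G n, ∫⁻ y, ENNReal.ofReal (V y) ∂(κ (ω n)) ∂μ :=
      markov_lintegral κ μ n _ (avoidSet_comap G hG n)
        (hMarkov x n _ (avoidSet_comap G hG n)) _
        (ENNReal.measurable_ofReal.comp hV_meas)
    have e3 : ∫⁻ ω in avoidSet G n, ∫⁻ y, ENNReal.ofReal (V y) ∂(κ (ω n)) ∂μ
        ≤ ∫⁻ ω in avoidSet G n,
          ENNReal.ofReal ((1 - β) * V (ω n) + b * G.indicator 1 (ω n)) ∂μ :=
      lintegral_mono fun ω => hdrift (ω n)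
    exact le_trans e1 (le_of_le_of_eq (le_of_eq e2) rfl |>.trans e3)
  -- first step, using the starting condition
  have hM1 : M 1 ≤ C := by
    have h0 : avoidSet G 0 = Set.univ := by
      ext ω; simp only [avoidSet, Set.mem_setOf_eq, Set.mem_univ, iff_true]
      intro k hk1 hk0; omega
    have h := hstep0 0
    rw [h0, Measure.restrict_univ] at h
    set c := ((1 - β) * V x + b * G.indicator 1 x) with hc
    set f : (ℕ → D) → ℝ := fun ω => (1 - β) * V (ω 0) + b * G.indicator 1 (ω 0) with hf
    have hfm : Measurable f := by
      apply Measurable.add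
      · exact (measurable_const.mul (hV_meas.comp (measurable_pi_apply 0)))
      · exact measurable_const.mul ((measurable_one.indicator hG).comp (measurable_pi_apply 0))
    have hTm : MeasurableSet {ω : ℕ → D | f ω = c} :=
      hfm (measurableSet_singleton c)
    have hT1 : μ {ω : ℕ → D | f ω = c} = 1 := by
      refine le_antisymm prob_le_one ?_
      refine le_trans (le_of_eq (hstart x).symm) (measure_mono fun ω hω => ?_)
      simp only [Set.mem_setOf_eq] at hω ⊢
      rw [hf]; simp only [hω]; exact hc.symm
    have hTc : μ {ω : ℕ → D | f ω = c}ᶜ = 0 := by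
      rw [measure_compl hTm (measure_ne_top _ _), hT1, measure_univ]; simp
    have hae : (fun ω : ℕ → D => ENNReal.ofReal (f ω)) =ᵐ[μ] fun _ => ENNReal.ofReal c := by
      rw [Filter.EventuallyEq, ae_iff]
      refine measure_mono_null (fun ω hω => ?_) hTc
      simp only [Set.mem_setOf_eq, Set.mem_compl_iff] at hω ⊢
      exact fun he => hω (by rw [he])
    have h2 : ∫⁻ ω, ENNReal.ofReal (f ω) ∂μ = ENNReal.ofReal c := by
      rw [lintegral_congr_ae hae, lintegral_const, measure_univ, mul_one]
    refine le_trans h (le_of_eq h2 |>.trans ?_)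
    apply ENNReal.ofReal_le_ofReal
    rw [hc]
    have : G.indicator (1 : D → ℝ) x ≤ 1 := by
      by_cases hx : x ∈ G <;> simp [hx]
    nlinarith
  -- geometric decay
  have hstep : ∀ n, 1 ≤ n → M (n+1) ≤ r * M n := by
    intro n hn
    refine le_trans (hstep0 n) ?_
    have heq : ∫⁻ ω in avoidSet G n,
        ENNReal.ofReal ((1 - β) * V (ω n) + b * G.indicator 1 (ω n)) ∂μ
        = ∫⁻ ω in avoidSet G n, r * ENNReal.ofReal (V (ω n)) ∂μ := by
      refine setLIntegral_congr_fun (avoidSet_measurable G hG n) (fun ω hω => ?_)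
      have hωn : ω n ∉ G := hω n hn le_rfl
      rw [Set.indicator_of_notMem hωn, mul_zero, add_zero, ENNReal.ofReal_mul h1β]
    rw [heq, lintegral_const_mul r ((hVm n))]
  have hbound : ∀ n, M (n+1) ≤ r^n * C := by
    intro n; induction n with
    | zero => simpa using hM1
    | succ n ih =>
      calc M (n+2) ≤ r * M (n+1) := hstep (n+1) (by omega)
        _ ≤ r * (r^n * C) := by gcongr
        _ = r^(n+1) * C := by ring
  have hPA : ∀ n, μ (avoidSet G (n+1)) ≤ r^n * C := by
    intro n
    refine le_trans ?_ (hbound n)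
    calc μ (avoidSet G (n+1)) = ∫⁻ _ in avoidSet G (n+1), 1 ∂μ := (setLIntegral_one _).symm
      _ ≤ M (n+1) := lintegral_mono fun ω => ENNReal.one_le_ofReal.mpr (hV_one _)
  -- Part 1 : a.s. finiteness
  have hNm : MeasurableSet (⋂ n, avoidSet G n) :=
    MeasurableSet.iInter fun n => avoidSet_measurable G hG n
  have hN0 : μ (⋂ n, avoidSet G n) = 0 := by
    have hle : ∀ n, μ (⋂ m, avoidSet G m) ≤ r^n * C := fun n =>
      le_trans (measure_mono (Set.iInter_subset _ (n+1))) (hPA n)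
    have htend : Filter.Tendsto (fun n : ℕ => r^n * C) Filter.atTop (nhds 0) := by
      have := ENNReal.Tendsto.mul_const (b := C)
        (ENNReal.tendsto_pow_atTop_nhds_zero_of_lt_one hr1)
        (Or.inr (by rw [hCdef]; exact ENNReal.ofReal_ne_top))
      simpa using this
    exact le_antisymm (ge_of_tendsto' htend hle) zero_le
  have hset : {ω : ℕ → D | hittingTimeGe1 G ω < ⊤} = (⋂ n, avoidSet G n)ᶜ := by
    ext ω
    simp only [Set.mem_compl_iff, Set.mem_iInter, Set.mem_setOf_eq, lt_top_iff_ne_top]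
    constructor
    · intro h hall
      cases hσ : hittingTimeGe1 G ω with
      | top => exact h hσ
      | coe k =>
        have := (lt_hittingTime_iff G ω k).mpr (hall k)
        rw [hσ] at this
        exact absurd this (lt_irrefl _)
    · intro h hc
      exact h fun n => (lt_hittingTime_iff G ω n).mp (by rw [hc]; exact lt_top_iff_ne_top.mpr (ENat.coe_ne_top n))
  constructor
  · rw [hset, measure_compl hNm (measure_ne_top _ _), hN0, measure_univ]; simp
  -- Part 2 : expectation bound
  · have hptw : ∀ ω : ℕ → D, ((hittingTimeGe1 G ω : ℝ≥0∞))
        = ∑' n : ℕ, (avoidSet G n).indicator (fun _ => (1:ℝ≥0∞)) ω := by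
      intro ω
      rw [enat_coe_eq_tsum]
      refine tsum_congr fun n => ?_
      by_cases h : ω ∈ avoidSet G n
      · rw [if_pos ((lt_hittingTime_iff G ω n).mpr h), Set.indicator_of_mem h]
      · rw [if_neg (fun hc => h ((lt_hittingTime_iff G ω n).mp hc)), Set.indicator_of_notMem h]
    have hint : ∫⁻ ω, ((hittingTimeGe1 G ω : ℝ≥0∞)) ∂μ = ∑' n, μ (avoidSet G n) := by
      calc ∫⁻ ω, ((hittingTimeGe1 G ω : ℝ≥0∞)) ∂μ
          = ∫⁻ ω, ∑' n : ℕ, (avoidSet G n).indicator (fun _ => (1:ℝ≥0∞)) ω ∂μ :=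
            lintegral_congr hptw
        _ = ∑' n : ℕ, ∫⁻ ω, (avoidSet G n).indicator (fun _ => (1:ℝ≥0∞)) ω ∂μ :=
            lintegral_tsum fun n =>
              ((measurable_one.indicator (avoidSet_measurable G hG n)).aemeasurable)
        _ = ∑' n : ℕ, μ (avoidSet G n) := by
            exact tsum_congr fun n => lintegral_indicator_one (avoidSet_measurable G hG n)
    rw [hint]
    have hsum : ∑' n, μ (avoidSet G n) ≤ 1 + ∑' n : ℕ, r^n * C := by
      rw [tsum_eq_zero_add' ENNReal.summable]
      exact add_le_add prob_le_one (ENNReal.tsum_le_tsum hPA)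
    have hgeo : ∑' n : ℕ, r^n * C = (ENNReal.ofReal β)⁻¹ * C := by
      rw [ENNReal.tsum_mul_right, ENNReal.tsum_geometric]
      congr 1
      rw [hrdef, ← ENNReal.ofReal_one, ← ENNReal.ofReal_sub 1 h1β]
      norm_num
    have hβ0 : ENNReal.ofReal β ≠ 0 := (ENNReal.ofReal_pos.mpr hβ).ne'
    have key2 : ENNReal.ofReal β + C ≤ ENNReal.ofReal (V x + b) := by
      rw [hCdef, ← ENNReal.ofReal_add hβ.le (by nlinarith [hV_one x])]
      apply ENNReal.ofReal_le_ofReal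
      nlinarith [hV_one x]
    calc ∑' n, μ (avoidSet G n) ≤ 1 + ∑' n : ℕ, r^n * C := hsum
      _ = 1 + (ENNReal.ofReal β)⁻¹ * C := by rw [hgeo]
      _ = (ENNReal.ofReal β + C) * (ENNReal.ofReal β)⁻¹ := by
          rw [add_mul, ENNReal.mul_inv_cancel hβ0 ENNReal.ofReal_ne_top, mul_comm C]
      _ ≤ ENNReal.ofReal (V x + b) * (ENNReal.ofReal β)⁻¹ := by gcongr
      _ = ENNReal.ofReal (V x + b) / ENNReal.ofReal β := by rw [div_eq_mul_inv]
      _ = ENNReal.ofReal ((V x + b) / β) := (ENNReal.ofReal_div_of_pos hβ).symm
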